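/- Let φ be defined by φ(0)=0, φ(1)=1, φ(n) = 2⌊−1/2 + (1/2)√(2n−5)⌋ + 3 for odd n ≥ 3, and φ(n) = 2⌊(1/2)√(2n−4)⌋ + 2 for even n ≥ 2. Then: (i) φ(n) ≤ φ(n−1)+1 and φ(n) ≤ φ(n+1)+1 for all n ∈ ℕ; (ii) φ(n) ≤ φ(n+2) for all n ∈ ℕ; (iii) φ(n) ≤ φ(n−3)+1 for all n ≥ 5; (iv) φ(n) ≤ φ(n−5)+1 for all n ≥ 11; (v) φ(n₁−t) + φ(n₂+t) ≤ φ(n₁) + φ(n₂) + 6 for all t ≤ n₁ ≤ n₂; (vi) φ(n)+2 ≤ φ(m) + φ(n−m) for all m with 3 ≤ m and 3 ≤ n−m, whenever n ≥ 11; and (vii) there exists m₀ ∈ ℕ such that φ(n) + 52 ≤ φ(m) + φ(n−m) for all m with m₀ ≤ m and m₀ ≤ n−m. -/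

import Mathlib

open scoped BigOperators
open Real

noncomputable section

/-- Points of the plane. -/
abbrev Pt := EuclideanSpace ℝ (Fin 2)

/-- An `n`-particle configuration: positions in the plane together with charges in `{-1, 1}`. -/
structure Config (n : ℕ) where
  x : Fin n → Pt
  q : Fin n → ℤ
  hq : ∀ i, q i = 1 ∨ q i = -1

/-- The configurational energy
`E(C) = (1/2) Σ_{i≠j, q_i=q_j} V_r(|x_i-x_j|) + (1/2) Σ_{i≠j, q_i≠q_j} V_a(|x_i-x_j|)`. -/
def energy (Va Vr : ℝ → EReal) {n : ℕ} (C : Config n) : EReal :=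
  ((1/2 : ℝ) : EReal) * (∑ i : Fin n, ∑ j : Fin n,
      if i ≠ j ∧ C.q i = C.q j then Vr (dist (C.x i) (C.x j)) else 0)
  + ((1/2 : ℝ) : EReal) * (∑ i : Fin n, ∑ j : Fin n,
      if i ≠ j ∧ C.q i ≠ C.q j then Va (dist (C.x i) (C.x j)) else 0)

/-- Slope of (the real part of) `V` between `a` and `r`. -/
def slope' (V : ℝ → EReal) (a r : ℝ) : ℝ := ((V r).toReal - (V a).toReal) / (r - a)

/-- Assumptions [i]-[viii] on the attractive-repulsive potential `Va` and the repulsive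
potential `Vr`, with reference parameter `r₀ ∈ [1, (2 sin(π/7))⁻¹)`.  The left derivative of
`Vr` at `√2` is encoded as the supremum of slopes from the left, and the right derivative
of `Vr` at `1` as the infimum of slopes from the right (`Vr` is convex and real-valued
on `[1,∞)`, so these coincide with the one-sided derivatives). -/
structure PotentialAssumptions (r₀ : ℝ) (Va Vr : ℝ → EReal) : Prop where
  r₀_lb : 1 ≤ r₀
  r₀_ub : r₀ < (2 * Real.sin (Real.pi / 7))⁻¹
  va_inf : ∀ r : ℝ, r < 1 → Va r = ⊤
  va_one : Va 1 = ((-1 : ℝ) : EReal)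
  va_gt : ∀ r : ℝ, r ≠ 1 → ((-1 : ℝ) : EReal) < Va r
  va_nonpos : ∀ r : ℝ, 1 ≤ r → Va r ≤ 0
  va_zero : ∀ r : ℝ, r₀ < r → Va r = 0
  vr_inf : ∀ r : ℝ, r < 1 → Vr r = ⊤
  vr_nonneg : ∀ r : ℝ, 1 ≤ r → 0 ≤ Vr r
  vr_fin : ∀ r : ℝ, 1 ≤ r → Vr r < ⊤
  vr_antitone : ∀ r s : ℝ, 1 ≤ r → r ≤ s → Vr s ≤ Vr r
  vr_convex : ConvexOn ℝ (Set.Ici (1 : ℝ)) (fun r => (Vr r).toReal)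
  vr_quant : ((6 : ℝ) : EReal) < Vr (2 * r₀ * Real.sin (Real.pi / 5))
  vr_zero_iff : ∀ r : ℝ, Vr r = 0 ↔ Real.sqrt 2 ≤ r
  slope_left : sSup (slope' Vr (Real.sqrt 2) '' Set.Ico 1 (Real.sqrt 2))
      < -16 / (Real.sqrt 2 * Real.pi)
  slope_right : ∀ r : ℝ, 1 < r → r ≤ r₀ →
      -(1/2) * sInf (slope' Vr 1 '' Set.Ioi (1 : ℝ)) < slope' Va 1 r

/-- The net charge `Q(C) = Σ_i q_i`. -/
def netCharge {n : ℕ} (C : Config n) : ℤ := ∑ i : Fin n, C.q i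

/-- The bond graph: atoms are bonded iff `0 < |x_i - x_j| ≤ r₀`. -/
def bondGraph (r₀ : ℝ) {n : ℕ} (C : Config n) : SimpleGraph (Fin n) where
  Adj i j := C.x i ≠ C.x j ∧ dist (C.x i) (C.x j) ≤ r₀
  symm := ⟨fun i j h => ⟨h.1.symm, by rw [dist_comm]; exact h.2⟩⟩
  loopless := ⟨fun i h => h.1 rfl⟩

/-- The number of bonds. -/
def numBonds (r₀ : ℝ) {n : ℕ} (C : Config n) : ℕ := (bondGraph r₀ C).edgeSet.ncard

/-- A ground state minimizes the energy among all `n`-particle configurations. -/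
def IsGroundState (Va Vr : ℝ → EReal) {n : ℕ} (C : Config n) : Prop :=
  ∀ C' : Config n, energy Va Vr C ≤ energy Va Vr C'

/-- Alternating charge distribution: bonded atoms have opposite charges. -/
def AlternatingCharges (r₀ : ℝ) {n : ℕ} (C : Config n) : Prop :=
  ∀ i j : Fin n, (bondGraph r₀ C).Adj i j → C.q i ≠ C.q j

/-- A bond is acyclic if it lies on no simple cycle of the graph. -/
def IsAcyclicBond {n : ℕ} (G : SimpleGraph (Fin n)) (e : Sym2 (Fin n)) : Prop :=
  e ∈ G.edgeSet ∧ ∀ (u : Fin n) (c : G.Walk u u), c.IsCycle → e ∉ c.edges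

/-- `v` lies on a simple cycle of `G` whose edge set is `S`. -/
def LiesOnCycleWithEdges {n : ℕ} (G : SimpleGraph (Fin n)) (v : Fin n)
    (S : Set (Sym2 (Fin n))) : Prop :=
  ∃ (u : Fin n) (c : G.Walk u u), c.IsCycle ∧ v ∈ c.support ∧ S = {e | e ∈ c.edges}

/-- A bridge: an acyclic bond contained in a simple path connecting two vertices lying
in two distinct cycles. -/
def IsBridgeBond {n : ℕ} (G : SimpleGraph (Fin n)) (e : Sym2 (Fin n)) : Prop :=
  IsAcyclicBond G e ∧ ∃ (u v : Fin n) (p : G.Walk u v) (S₁ S₂ : Set (Sym2 (Fin n))),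
    p.IsPath ∧ e ∈ p.edges ∧ LiesOnCycleWithEdges G u S₁ ∧ LiesOnCycleWithEdges G v S₂ ∧
    S₁ ≠ S₂

/-- A flag: an acyclic bond which is not a bridge. -/
def IsFlagBond {n : ℕ} (G : SimpleGraph (Fin n)) (e : Sym2 (Fin n)) : Prop :=
  IsAcyclicBond G e ∧ ¬ IsBridgeBond G e

/-- The square lattice `ℤ² ⊂ ℝ²`. -/
def squareLattice : Set Pt := {p | (∃ a : ℤ, p 0 = (a : ℝ)) ∧ (∃ b : ℤ, p 1 = (b : ℝ))}

/-- The set of attainable net charges `Q_net(n) = (2ℤ + n mod 2) ∩ [-n, n]`. -/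
def Qnet (n : ℕ) : Set ℤ := {q | |q| ≤ (n : ℤ) ∧ q % 2 = (n : ℤ) % 2}

/-- The minimal energy among `n`-particle configurations with net charge `qnet`. -/
def Emin (Va Vr : ℝ → EReal) (n : ℕ) (qnet : ℤ) : EReal :=
  sInf ((fun C : Config n => energy Va Vr C) '' {C : Config n | netCharge C = qnet})

/-- The saturation net charge
`q_sat^n = min {q ∈ Q_net(n) ∩ [0,n] : E^n_min(q) = -2n + 2q}`. -/
def qsat (Va Vr : ℝ → EReal) (n : ℕ) : ℤ :=
  sInf {qnet : ℤ | qnet ∈ Qnet n ∧ 0 ≤ qnet ∧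
    Emin Va Vr n qnet = (((-2) * (n : ℝ) + 2 * (qnet : ℝ) : ℝ) : EReal)}

/-- A configuration is optimal (for its own net charge) if it attains `E^n_min(Q(C))`. -/
def IsOptimal (Va Vr : ℝ → EReal) {n : ℕ} (C : Config n) : Prop :=
  energy Va Vr C = Emin Va Vr n (netCharge C)

/-- The function `φ` characterizing the saturation net charge. -/
def phi (n : ℕ) : ℤ :=
  if n = 0 then 0
  else if n = 1 then 1
  else if n % 2 = 1 then 2 * ⌊(-1/2 : ℝ) + (1/2) * Real.sqrt (2 * (n : ℝ) - 5)⌋ + 3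
  else 2 * ⌊(1/2 : ℝ) * Real.sqrt (2 * (n : ℝ) - 4)⌋ + 2

/-- The neighborhood `N(x_i) = (X_n \ {x_i}) ∩ {|x - x_i| ≤ r₀}`. -/
def nbhd (r₀ : ℝ) {n : ℕ} (C : Config n) (i : Fin n) : Set Pt :=
  {y | (∃ j : Fin n, C.x j = y) ∧ y ≠ C.x i ∧ dist y (C.x i) ≤ r₀}

/-- The square `S_n = {x ∈ ℤ² : x₁,x₂ ≥ 0, |x|_∞ ≤ ⌊√n - 1⌋}`. -/
def Sn (n : ℕ) : Set Pt :=
  {p | ∃ a b : ℤ, p 0 = (a : ℝ) ∧ p 1 = (b : ℝ) ∧ 0 ≤ a ∧ 0 ≤ b ∧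
    max a b ≤ ⌊Real.sqrt (n : ℝ) - 1⌋}

/-- The diamond `D_n = {x ∈ ℤ² : |x|₁ ≤ ⌊(-1 + √(2n-1))/2⌋}`. -/
def Dn (n : ℕ) : Set Pt :=
  {p | ∃ a b : ℤ, p 0 = (a : ℝ) ∧ p 1 = (b : ℝ) ∧
    |a| + |b| ≤ ⌊((-1) + Real.sqrt (2 * (n : ℝ) - 1)) / 2⌋}

/-- The square `S_{k²} = {x ∈ ℤ² : x₁,x₂ ≥ 0, |x|_∞ ≤ k - 1}` with `k²` lattice points. -/
def SqK (k : ℕ) : Set Pt :=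
  {p | ∃ a b : ℤ, p 0 = (a : ℝ) ∧ p 1 = (b : ℝ) ∧ 0 ≤ a ∧ 0 ≤ b ∧
    max a b ≤ (k : ℤ) - 1}

/-- `β(n) = 2n - 2√n`. -/
def beta (n : ℕ) : ℝ := 2 * (n : ℝ) - 2 * Real.sqrt (n : ℝ)

end

lemma phi0 : phi 0 = 0 := by norm_num [phi]
lemma phi1 : phi 1 = 1 := by norm_num [phi]

lemma phi_odd_fact {n : ℕ} (h2 : 2 ≤ n) (ho : n % 2 = 1) :
    phi n % 2 = 1 ∧ 3 ≤ phi n ∧ (phi n - 2)^2 ≤ 2*(n:ℤ) - 5 ∧ 2*(n:ℤ) - 3 ≤ (phi n)^2 := by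
  have h3 : 3 ≤ n := by omega
  have hne0 : n ≠ 0 := by omega
  have hne1 : n ≠ 1 := by omega
  have hphi : phi n = 2 * ⌊(-1/2 : ℝ) + (1/2) * Real.sqrt (2 * (n:ℝ) - 5)⌋ + 3 := by
    simp only [phi, if_neg hne0, if_neg hne1, if_pos ho]
  set f := ⌊(-1/2 : ℝ) + (1/2) * Real.sqrt (2 * (n:ℝ) - 5)⌋ with hf
  have hn3 : (3:ℝ) ≤ (n:ℝ) := by exact_mod_cast h3
  have hnn : (0:ℝ) ≤ 2*(n:ℝ) - 5 := by linarith
  set r := Real.sqrt (2*(n:ℝ) - 5) with hrdef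
  have hr0 : 0 ≤ r := Real.sqrt_nonneg _
  have hr2 : r^2 = 2*(n:ℝ) - 5 := Real.sq_sqrt hnn
  have hf1 : (f:ℝ) ≤ -1/2 + (1/2) * r := Int.floor_le _
  have hf2 : -1/2 + (1/2)*r < (f:ℝ) + 1 := Int.lt_floor_add_one _
  have hr1 : 1 ≤ r := by nlinarith
  have hf0 : 0 ≤ f := by
    exact Int.le_floor.2 (by push_cast; linarith)
  have hub : ((2*f+1 : ℤ):ℝ)^2 ≤ 2*(n:ℝ) - 5 := by
    have h1 : ((2*f+1:ℤ):ℝ) ≤ r := by push_cast; linarith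
    have hf0R : (0:ℝ) ≤ (f:ℝ) := by exact_mod_cast hf0
    have h1' : (0:ℝ) ≤ ((2*f+1:ℤ):ℝ) := by push_cast; linarith
    nlinarith
  have hubZ : (2*f+1)^2 ≤ 2*(n:ℤ) - 5 := by exact_mod_cast hub
  have hlb : 2*(n:ℝ) - 5 < ((2*f+3:ℤ):ℝ)^2 := by
    have h1 : r < ((2*f+3:ℤ):ℝ) := by push_cast; linarith
    nlinarith
  have hlbZ : 2*(n:ℤ) - 5 < (2*f+3)^2 := by exact_mod_cast hlb
  rw [hphi]
  refine ⟨by omega, by omega, by ring_nf; ring_nf at hubZ; linarith, ?_⟩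
  obtain ⟨E, hE⟩ : ∃ E, f*f = E := ⟨_, rfl⟩
  have e1 : (2*f+3)^2 = 4*E+12*f+9 := by rw [← hE]; ring
  rw [e1] at hlbZ
  have e2 : (2*f+3)^2 = 4*E+12*f+9 := e1
  calc 2*(n:ℤ) - 3 ≤ 4*E+12*f+9 := by omega
  _ = (2*f+3)^2 := e2.symm

lemma phi_even_fact {n : ℕ} (h2 : 2 ≤ n) (he : n % 2 = 0) :
    phi n % 2 = 0 ∧ 2 ≤ phi n ∧ (phi n - 2)^2 ≤ 2*(n:ℤ) - 4 ∧ 2*(n:ℤ) - 2 ≤ (phi n)^2 := by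
  have hne0 : n ≠ 0 := by omega
  have hne1 : n ≠ 1 := by omega
  have hno : ¬ (n % 2 = 1) := by omega
  have hphi : phi n = 2 * ⌊(1/2 : ℝ) * Real.sqrt (2 * (n:ℝ) - 4)⌋ + 2 := by
    simp only [phi, if_neg hne0, if_neg hne1, if_neg hno]
  set f := ⌊(1/2 : ℝ) * Real.sqrt (2 * (n:ℝ) - 4)⌋ with hf
  have hn2 : (2:ℝ) ≤ (n:ℝ) := by exact_mod_cast h2
  have hnn : (0:ℝ) ≤ 2*(n:ℝ) - 4 := by linarith
  set r := Real.sqrt (2*(n:ℝ) - 4) with hrdef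
  have hr0 : 0 ≤ r := Real.sqrt_nonneg _
  have hr2 : r^2 = 2*(n:ℝ) - 4 := Real.sq_sqrt hnn
  have hf1 : (f:ℝ) ≤ (1/2) * r := Int.floor_le _
  have hf2 : (1/2)*r < (f:ℝ) + 1 := Int.lt_floor_add_one _
  have hf0 : 0 ≤ f := by
    exact Int.le_floor.2 (by push_cast; linarith)
  have hub : ((2*f : ℤ):ℝ)^2 ≤ 2*(n:ℝ) - 4 := by
    have h1 : ((2*f:ℤ):ℝ) ≤ r := by push_cast; linarith
    have hf0R : (0:ℝ) ≤ (f:ℝ) := by exact_mod_cast hf0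
    have h1' : (0:ℝ) ≤ ((2*f:ℤ):ℝ) := by push_cast; linarith
    nlinarith
  have hubZ : (2*f)^2 ≤ 2*(n:ℤ) - 4 := by exact_mod_cast hub
  have hlb : 2*(n:ℝ) - 4 < ((2*f+2:ℤ):ℝ)^2 := by
    have h1 : r < ((2*f+2:ℤ):ℝ) := by push_cast; linarith
    nlinarith
  have hlbZ : 2*(n:ℤ) - 4 < (2*f+2)^2 := by exact_mod_cast hlb
  rw [hphi]
  refine ⟨by omega, by omega, by ring_nf; ring_nf at hubZ; linarith, ?_⟩
  obtain ⟨E, hE⟩ : ∃ E, f*f = E := ⟨_, rfl⟩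
  have e1 : (2*f+2)^2 = 4*E+8*f+4 := by rw [← hE]; ring
  rw [e1] at hlbZ
  calc 2*(n:ℤ) - 2 ≤ 4*E+8*f+4 := by omega
  _ = (2*f+2)^2 := e1.symm

lemma phi_parity (n : ℕ) : phi n % 2 = (n:ℤ) % 2 := by
  rcases Nat.lt_or_ge n 2 with h|h
  · interval_cases n <;> norm_num [phi0, phi1]
  · by_cases ho : n % 2 = 1
    · have := (phi_odd_fact h ho).1; omega
    · have := (phi_even_fact h (by omega)).1; omega

lemma phi_nonneg (n : ℕ) : 0 ≤ phi n := by
  rcases Nat.lt_or_ge n 2 with h|h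
  · interval_cases n <;> norm_num [phi0, phi1]
  · by_cases ho : n % 2 = 1
    · have := (phi_odd_fact h ho).2.1; omega
    · have := (phi_even_fact h (by omega)).2.1; omega

lemma phi_le1 {n : ℕ} (h : n ≤ 1) : phi n ≤ 1 := by
  interval_cases n <;> norm_num [phi0, phi1]

lemma phi_two {n : ℕ} (h : 2 ≤ n) : 2 ≤ phi n := by
  by_cases ho : n % 2 = 1
  · have := (phi_odd_fact h ho).2.1; omega
  · exact (phi_even_fact h (by omega)).2.1

lemma phi_pos {n : ℕ} (h : 1 ≤ n) : 1 ≤ phi n := by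
  rcases Nat.lt_or_ge n 2 with h'|h'
  · interval_cases n <;> norm_num [phi1]
  · have := phi_two h'; omega

lemma phi_ub {n : ℕ} (h : 2 ≤ n) : (phi n - 2)^2 ≤ 2*(n:ℤ) - 4 := by
  by_cases ho : n % 2 = 1
  · have := (phi_odd_fact h ho).2.2.1; linarith
  · exact (phi_even_fact h (by omega)).2.2.1

lemma phi_lb' (n : ℕ) : 2*(n:ℤ) - 2 - (n:ℤ) % 2 ≤ (phi n)^2 := by
  rcases Nat.lt_or_ge n 2 with h|h
  · interval_cases n <;> norm_num [phi0, phi1]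
  · by_cases ho : n % 2 = 1
    · have := (phi_odd_fact h ho).2.2.2
      have h1 : ((n:ℤ)) % 2 = 1 := by omega
      linarith
    · have := (phi_even_fact h (by omega)).2.2.2
      have h1 : ((n:ℤ)) % 2 = 0 := by omega
      linarith

lemma phi_lbw (n : ℕ) : 2*(n:ℤ) - 3 ≤ (phi n)^2 := by
  have := phi_lb' n
  have h1 : ((n:ℤ)) % 2 ≤ 1 := by omega
  linarith

lemma phi_mono {m n : ℕ} (h : m ≤ n) : phi m ≤ phi n + 1 := by
  rcases Nat.lt_or_ge m 2 with h'|h'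
  · have := phi_le1 (by omega : m ≤ 1)
    have := phi_nonneg n
    omega
  · by_contra hc
    push_neg at hc
    have h1 : (phi m - 2)^2 ≤ 2*(m:ℤ) - 4 := phi_ub h'
    have h2 : 2*(n:ℤ) - 3 ≤ (phi n)^2 := phi_lbw n
    have h3 : 2 ≤ phi n := phi_two (by omega)
    have h4 : phi n ≤ phi m - 2 := by omega
    have h5 : (phi n)^2 ≤ (phi m - 2)^2 := by nlinarith
    have h6 : (m:ℤ) ≤ (n:ℤ) := by exact_mod_cast h
    linarith

lemma sq_le_sq_int {x y : ℤ} (h0 : 0 ≤ x) (h : x ≤ y) : x^2 ≤ y^2 := by nlinarith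

lemma vaux1 {B C D n₁ n₂ t : ℤ} (hC0 : 0 ≤ C) (hD0 : 0 ≤ D) (htn : t ≤ n₁)
    (h2 : (C+D+5)^2 ≤ (B-2)^2) (hFB : (B-2)^2 ≤ 2*(n₂+t)-4)
    (hlC : 2*n₁-3 ≤ C^2) (hlD : 2*n₂-3 ≤ D^2) : False := by
  nlinarith [mul_nonneg hC0 hD0]

lemma vaux2 {A B C D n₁ n₂ t : ℤ} (hA2 : 2 ≤ A) (hC0 : 0 ≤ C)
    (hAC : A ≤ C+1) (hCD : C ≤ D+1)
    (h2 : (D+(C-A)+6)^2 ≤ (B-2)^2) (hFB : (B-2)^2 ≤ 2*(n₂+t)-4)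
    (hFA : (A-2)^2 ≤ 2*(n₁-t)-4) (hlC : 2*n₁-3 ≤ C^2) (hlD : 2*n₂-3 ≤ D^2) : False := by
  nlinarith [sq_nonneg (2*(C-A)+7),
    mul_nonneg (show (0:ℤ) ≤ C - A + 6 by omega) (show (0:ℤ) ≤ D - C + 1 by omega)]

lemma vaux3 {a b m k : ℤ} (h : (a+b-2)^2 ≤ 2*(m+k)-4)
    (h1 : 2*m-3 ≤ a^2) (h2 : 2*k-3 ≤ b^2) : (a-2)*(b-2) ≤ 3 := by nlinarith

lemma vaux4 {a b : ℤ} (h : (a-2)*(b-2) ≤ 3) (hb : 3 ≤ b) (ha : 2 ≤ a) : a ≤ 5 := by nlinarith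

lemma vaux5 {a m : ℤ} (h : 2*m-3 ≤ a^2) (h0 : 0 ≤ a) (hm : 5000 ≤ m) : 100 ≤ a := by nlinarith

lemma vaux6 {a b q m k : ℤ} (h2 : (a+b-53)^2 ≤ (q-2)^2) (hF3 : (q-2)^2 ≤ 2*(m+k)-4)
    (hla : 2*m-3 ≤ a^2) (hlb : 2*k-3 ≤ b^2) (ha : 100 ≤ a) (hb : 100 ≤ b) : False := by
  nlinarith [mul_nonneg (show (0:ℤ) ≤ a - 100 by omega) (show (0:ℤ) ≤ b - 100 by omega)]

/-- Properties (i)-(vii) of the function `φ`. -/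
theorem phi_properties :
    (∀ n : ℕ, phi n ≤ phi (n - 1) + 1 ∧ phi n ≤ phi (n + 1) + 1) ∧
    (∀ n : ℕ, phi n ≤ phi (n + 2)) ∧
    (∀ n : ℕ, 5 ≤ n → phi n ≤ phi (n - 3) + 1) ∧
    (∀ n : ℕ, 11 ≤ n → phi n ≤ phi (n - 5) + 1) ∧
    (∀ t n₁ n₂ : ℕ, t ≤ n₁ → n₁ ≤ n₂ →
      phi (n₁ - t) + phi (n₂ + t) ≤ phi n₁ + phi n₂ + 6) ∧
    (∀ n m : ℕ, 11 ≤ n → 3 ≤ m → 3 ≤ n - m → m ≤ n →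
      phi n + 2 ≤ phi m + phi (n - m)) ∧
    (∃ m₀ : ℕ, ∀ n m : ℕ, m₀ ≤ m → m₀ ≤ n - m → m ≤ n →
      phi n + 52 ≤ phi m + phi (n - m)) := by
  refine ⟨?_, ?_, ?_, ?_, ?_, ?_, ?_⟩
  · -- (i)
    intro n
    constructor
    · rcases Nat.lt_or_ge n 2 with h|h
      · have h0 := phi_nonneg (n-1)
        have h1 := phi_le1 (show n ≤ 1 by omega)
        omega
      · by_contra hc
        push_neg at hc
        have hpa := phi_parity n
        have hpc := phi_parity (n-1)
        have hge : phi (n-1) + 3 ≤ phi n := by omega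
        have h1 : (phi n - 2)^2 ≤ 2*(n:ℤ) - 4 := phi_ub h
        have h2 : 2*((n-1:ℕ):ℤ) - 3 ≤ (phi (n-1))^2 := phi_lbw (n-1)
        have h3 : ((n-1:ℕ):ℤ) = (n:ℤ) - 1 := by omega
        have h4 : 1 ≤ phi (n-1) := phi_pos (by omega)
        nlinarith
    · rcases Nat.lt_or_ge n 2 with h|h
      · have h0 := phi_nonneg (n+1)
        have h1 := phi_le1 (show n ≤ 1 by omega)
        omega
      · by_contra hc
        push_neg at hc
        have hpa := phi_parity n
        have hpc := phi_parity (n+1)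
        have hge : phi (n+1) + 3 ≤ phi n := by omega
        have h1 : (phi n - 2)^2 ≤ 2*(n:ℤ) - 4 := phi_ub h
        have h2 : 2*((n+1:ℕ):ℤ) - 3 ≤ (phi (n+1))^2 := phi_lbw (n+1)
        have h3 : ((n+1:ℕ):ℤ) = (n:ℤ) + 1 := by omega
        have h4 : 0 ≤ phi (n+1) := phi_nonneg _
        nlinarith
  · -- (ii)
    intro n
    rcases Nat.lt_or_ge n 2 with h|h
    · have h0 := phi_two (show 2 ≤ n+2 by omega)
      have h1 := phi_le1 (show n ≤ 1 by omega)
      omega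
    · by_contra hc
      push_neg at hc
      have hpa := phi_parity n
      have hpc := phi_parity (n+2)
      have hge : phi (n+2) + 2 ≤ phi n := by omega
      have h1 : (phi n - 2)^2 ≤ 2*(n:ℤ) - 4 := phi_ub h
      have h2 : 2*((n+2:ℕ):ℤ) - 3 ≤ (phi (n+2))^2 := phi_lbw (n+2)
      have h3 : ((n+2:ℕ):ℤ) = (n:ℤ) + 2 := by omega
      have h4 : 0 ≤ phi (n+2) := phi_nonneg _
      nlinarith
  · -- (iii)
    intro n hn
    by_contra hc
    push_neg at hc
    have hpa := phi_parity n
    have hpc := phi_parity (n-3)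
    have hge : phi (n-3) + 3 ≤ phi n := by omega
    have h1 : (phi n - 2)^2 ≤ 2*(n:ℤ) - 4 := phi_ub (by omega)
    have h2 : 2*((n-3:ℕ):ℤ) - 2 - ((n-3:ℕ):ℤ) % 2 ≤ (phi (n-3))^2 := phi_lb' (n-3)
    have h3 : ((n-3:ℕ):ℤ) = (n:ℤ) - 3 := by omega
    have h4 : 2 ≤ phi (n-3) := phi_two (by omega)
    rw [h3] at h2
    set c := phi (n-3) with hcdef
    have h5 : (c+1)^2 ≤ 2*(n:ℤ) - 4 := by nlinarith
    have h6 : c ≤ 2 := by nlinarith [show ((n:ℤ)-3) % 2 ≤ 1 by omega]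
    have h7 : c = 2 := by omega
    rw [h7] at h5 h2
    norm_num at h5 h2
    omega
  · -- (iv)
    intro n hn
    by_contra hc
    push_neg at hc
    have hpa := phi_parity n
    have hpc := phi_parity (n-5)
    have hge : phi (n-5) + 3 ≤ phi n := by omega
    have h1 : (phi n - 2)^2 ≤ 2*(n:ℤ) - 4 := phi_ub (by omega)
    have h2 : 2*((n-5:ℕ):ℤ) - 2 - ((n-5:ℕ):ℤ) % 2 ≤ (phi (n-5))^2 := phi_lb' (n-5)
    have h3 : ((n-5:ℕ):ℤ) = (n:ℤ) - 5 := by omega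
    have h4 : 2 ≤ phi (n-5) := phi_two (by omega)
    rw [h3] at h2
    set c := phi (n-5) with hcdef
    have hm2 : ((n:ℤ)-5) % 2 ≤ 1 ∧ 0 ≤ ((n:ℤ)-5) % 2 := by omega
    have h5 : (c+1)^2 ≤ 2*(n:ℤ) - 4 := by nlinarith
    have h6 : c ≤ 4 := by nlinarith
    have h7 : 3 ≤ c := by nlinarith
    have h8 : c = 3 ∨ c = 4 := by omega
    rcases h8 with h8|h8 <;> rw [h8] at h5 h2 <;> norm_num at h5 h2 <;> omega
  · -- (v)
    intro t n₁ n₂ ht h12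
    have hAC : phi (n₁ - t) ≤ phi n₁ + 1 := phi_mono (by omega)
    have hCD : phi n₁ ≤ phi n₂ + 1 := phi_mono h12
    by_contra hc
    push_neg at hc
    have hpA := phi_parity (n₁ - t)
    have hpB := phi_parity (n₂ + t)
    have hpC := phi_parity n₁
    have hpD := phi_parity n₂
    set A := phi (n₁ - t)
    set B := phi (n₂ + t)
    set C := phi n₁
    set D := phi n₂
    have hC0 : 0 ≤ C := phi_nonneg _
    have hD0 : 0 ≤ D := phi_nonneg _
    have hA0 : 0 ≤ A := phi_nonneg _
    have hsum : C + D + 8 ≤ A + B := by omega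
    have hB7 : D + 7 ≤ B := by omega
    have hnt2 : 2 ≤ n₂ + t := by
      by_contra h
      have := phi_le1 (show n₂ + t ≤ 1 by omega)
      omega
    have hFB : (B - 2)^2 ≤ 2*((n₂+t:ℕ):ℤ) - 4 := phi_ub hnt2
    have hcast1 : ((n₂+t:ℕ):ℤ) = (n₂:ℤ) + (t:ℤ) := by omega
    rw [hcast1] at hFB
    have hlC : 2*(n₁:ℤ) - 3 ≤ C^2 := phi_lbw n₁
    have hlD : 2*(n₂:ℤ) - 3 ≤ D^2 := phi_lbw n₂
    rcases Nat.lt_or_ge (n₁ - t) 2 with hsm|hbig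
    · -- n₁ - t ≤ 1
      have hA1 : A ≤ 1 := phi_le1 (by omega)
      have htn : (t:ℤ) ≤ (n₁:ℤ) := by exact_mod_cast ht
      have h1 : C + D + 5 ≤ B - 2 := by omega
      have h2 : (C + D + 5)^2 ≤ (B-2)^2 := sq_le_sq_int (by omega) (by omega)
      exact vaux1 hC0 hD0 htn h2 hFB hlC hlD
    · have hFA : (A - 2)^2 ≤ 2*((n₁-t:ℕ):ℤ) - 4 := phi_ub hbig
      have hcast2 : ((n₁-t:ℕ):ℤ) = (n₁:ℤ) - (t:ℤ) := by omega
      rw [hcast2] at hFA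
      have hA2 : 2 ≤ A := phi_two hbig
      have h1 : D + (C - A) + 6 ≤ B - 2 := by omega
      have h2 : (D + (C - A) + 6)^2 ≤ (B-2)^2 := sq_le_sq_int (by omega) (by omega)
      exact vaux2 hA2 hC0 hAC hCD h2 hFB hFA hlC hlD
  · -- (vi)
    intro n m hn hm hk hmn
    set k := n - m with hkdef
    have hkn : m + k = n := by omega
    by_contra hc
    push_neg at hc
    have hpa := phi_parity m
    have hpb := phi_parity k
    have hpq := phi_parity n
    set a := phi m
    set b := phi k
    set q := phi n
    have hnk : (n:ℤ) = (m:ℤ) + (k:ℤ) := by omega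
    have hq : a + b ≤ q := by omega
    have ha2 : 2 ≤ a := phi_two (by omega)
    have hb2 : 2 ≤ b := phi_two (by omega)
    have hF3 : (q - 2)^2 ≤ 2*(n:ℤ) - 4 := phi_ub (by omega)
    have hlba : 2*(m:ℤ) - 2 - (m:ℤ) % 2 ≤ a^2 := phi_lb' m
    have hlbb : 2*(k:ℤ) - 2 - (k:ℤ) % 2 ≤ b^2 := phi_lb' k
    have hQ : (a + b - 2)^2 ≤ 2*(n:ℤ) - 4 :=
      le_trans (sq_le_sq_int (by omega) (by omega)) hF3
    have hlba' : 2*(m:ℤ) - 3 ≤ a^2 := phi_lbw m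
    have hlbb' : 2*(k:ℤ) - 3 ≤ b^2 := phi_lbw k
    have hQ' : (a + b - 2)^2 ≤ 2*((m:ℤ)+(k:ℤ)) - 4 := by rw [hnk] at hQ; exact hQ
    have hprod : (a-2)*(b-2) ≤ 3 := vaux3 hQ' hlba' hlbb'
    have ha3 : 3 ≤ a := by
      by_contra h
      have ha : a = 2 := by omega
      rw [ha] at hlba hpa
      norm_num at hlba
      omega
    have hb3 : 3 ≤ b := by
      by_contra h
      have hb : b = 2 := by omega
      rw [hb] at hlbb hpb
      norm_num at hlbb
      omega
    have ha5 : a ≤ 5 := vaux4 hprod hb3 ha2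
    have hb5 : b ≤ 5 := vaux4 (by linarith [hprod, mul_comm (a-2) (b-2)]) ha3 hb2
    have hca : a = 3 ∨ a = 4 ∨ a = 5 := by omega
    have hcb : b = 3 ∨ b = 4 ∨ b = 5 := by omega
    rcases hca with ha|ha|ha <;> rcases hcb with hb|hb|hb <;>
      rw [ha] at hlba hpa hQ <;> rw [hb] at hlbb hpb hQ <;>
      norm_num at hlba hlbb hQ <;> omega
  · -- (vii)
    refine ⟨5000, fun n m hm hk hmn => ?_⟩
    set k := n - m with hkdef
    have hkn : m + k = n := by omega
    set a := phi m
    set b := phi k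
    set q := phi n
    have hnk : (n:ℤ) = (m:ℤ) + (k:ℤ) := by omega
    have hm' : (5000:ℤ) ≤ (m:ℤ) := by exact_mod_cast hm
    have hk' : (5000:ℤ) ≤ (k:ℤ) := by omega
    have hlba : 2*(m:ℤ) - 3 ≤ a^2 := phi_lbw m
    have hlbb : 2*(k:ℤ) - 3 ≤ b^2 := phi_lbw k
    have ha0 : 0 ≤ a := phi_nonneg _
    have hb0 : 0 ≤ b := phi_nonneg _
    have ha100 : 100 ≤ a := vaux5 hlba ha0 hm'
    have hb100 : 100 ≤ b := vaux5 hlbb hb0 hk'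
    have hq2 : 2 ≤ q := phi_two (by omega)
    have hF3 : (q - 2)^2 ≤ 2*(n:ℤ) - 4 := phi_ub (by omega)
    by_contra hc
    push_neg at hc
    have h1 : a + b - 53 ≤ q - 2 := by omega
    have h2 : (a + b - 53)^2 ≤ (q-2)^2 := sq_le_sq_int (by omega) h1
    have hF3' : (q - 2)^2 ≤ 2*((m:ℤ)+(k:ℤ)) - 4 := by rw [hnk] at hF3; exact hF3
    exact vaux6 h2 hF3' hlba hlbb ha100 hb100
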